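/- For binary strings x, y ∈ {0,1}^n, let |x̃⟩ denote the 2n-qubit state ⊗_{i=1}^n |x̃_i⟩ where |x̃_i⟩ = |00⟩ if x_i = 0 and |x̃_i⟩ = (|01⟩+|10⟩)/√2 if x_i = 1, and let A be an operator acting on the n 'first' qubits (Bob's qubits). If ⟨x̃|(A⊗I)|ỹ⟩ = 0 for all x ≠ y ∈ {0,1}^n, then ⟨x|A|y⟩ = 0 for all x ≠ y ∈ {0,1}^n. -/

import Mathlib

open Matrix

/-- The two-qubit state assigned to a bit: `|00⟩` for `0`, `(|01⟩+|10⟩)/√2` for `1`. -/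
noncomputable def pairState (b : Fin 2) : Fin 2 × Fin 2 → ℂ :=
  if b = 0 then (fun p => if p = (0, 0) then 1 else 0)
  else (fun p => if p.1 = p.2 then 0 else ((1 / Real.sqrt 2 : ℝ) : ℂ))

/-- The `2n`-qubit state `|x̃⟩ = ⊗ᵢ |x̃ᵢ⟩`. -/
noncomputable def tilde (n : ℕ) (x : Fin n → Fin 2) : (Fin n → Fin 2 × Fin 2) → ℂ :=
  fun f => ∏ i, pairState (x i) (f i)

/-- `A ⊗ I`, with `A` acting on the first qubit of each of the `n` pairs. -/
def AI (n : ℕ) (A : Matrix (Fin n → Fin 2) (Fin n → Fin 2) ℂ) :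
    Matrix (Fin n → Fin 2 × Fin 2) (Fin n → Fin 2 × Fin 2) ℂ :=
  fun f g => A (fun i => (f i).1) (fun i => (g i).1) *
    (if (fun i => (f i).2) = (fun i => (g i).2) then 1 else 0)

noncomputable def cw (x y : Fin 2) : ℂ :=
  if x = 1 ∧ y = 1 then 1/2 else if x = 0 ∧ y = 0 then 1 else ((1 / Real.sqrt 2 : ℝ) : ℂ)

def okb (x y u v : Fin 2) : Prop :=
  if x = 1 ∧ y = 1 then u = v else u = x ∧ v = y

instance (x y u v : Fin 2) : Decidable (okb x y u v) := by unfold okb; infer_instance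

lemma cw_ne_zero (x y : Fin 2) : cw x y ≠ 0 := by
  have h2 : Real.sqrt 2 ≠ 0 := by positivity
  fin_cases x <;> fin_cases y <;> simp [cw] <;> exact_mod_cast h2

lemma star_pairState (b : Fin 2) (p : Fin 2 × Fin 2) :
    (starRingEnd ℂ) (pairState b p) = pairState b p := by
  unfold pairState
  split_ifs <;> simp <;> split_ifs <;> simp

lemma w_eq (x y u v : Fin 2) :
    (∑ s : Fin 2, pairState x (u, s) * pairState y (v, s))
      = if okb x y u v then cw x y else 0 := by
  have h2 : ((Real.sqrt 2 : ℂ))⁻¹ * ((Real.sqrt 2 : ℂ))⁻¹ = 2⁻¹ := by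
    rw [← mul_inv]
    norm_cast
    rw [Real.mul_self_sqrt (by norm_num : (0:ℝ) ≤ 2)]
    norm_num
  fin_cases x <;> fin_cases y <;> fin_cases u <;> fin_cases v <;>
    simp [pairState, okb, cw, Fin.sum_univ_two, h2, Prod.ext_iff]

lemma prod_ite_cw (n : ℕ) (x y u v : Fin n → Fin 2) :
    (∏ i, (if okb (x i) (y i) (u i) (v i) then cw (x i) (y i) else 0))
      = (∏ i, cw (x i) (y i)) * (if (∀ i, okb (x i) (y i) (u i) (v i)) then (1:ℂ) else 0) := by
  by_cases h : ∀ i, okb (x i) (y i) (u i) (v i)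
  · rw [if_pos h, mul_one]
    exact Finset.prod_congr rfl fun i _ => if_pos (h i)
  · rw [if_neg h, mul_zero]
    push_neg at h
    obtain ⟨i, hi⟩ := h
    exact Finset.prod_eq_zero (Finset.mem_univ i) (if_neg hi)

lemma inner_eq (n : ℕ) (A : Matrix (Fin n → Fin 2) (Fin n → Fin 2) ℂ)
    (x y : Fin n → Fin 2) :
    star (tilde n x) ⬝ᵥ (AI n A).mulVec (tilde n y)
      = (∏ i, cw (x i) (y i)) *
        ∑ u : Fin n → Fin 2, ∑ v : Fin n → Fin 2,
          (if ∀ i, okb (x i) (y i) (u i) (v i) then A u v else 0) := by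
  classical
  have hstar : star (tilde n x) = tilde n x := by
    funext f
    simp only [Pi.star_apply, tilde]
    rw [show (star (∏ i, pairState (x i) (f i)) : ℂ) = (starRingEnd ℂ) (∏ i, pairState (x i) (f i)) from rfl,
      map_prod]
    exact Finset.prod_congr rfl fun i _ => star_pairState _ _
  have key : ∀ F : (Fin n → Fin 2 × Fin 2) → ℂ,
      ∑ f, F f = ∑ u : Fin n → Fin 2, ∑ s : Fin n → Fin 2, F (fun i => (u i, s i)) := by
    intro F
    rw [← Equiv.sum_comp (Equiv.arrowProdEquivProdArrow (Fin n) (fun _ => Fin 2) (fun _ => Fin 2)).symm F,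
      Fintype.sum_prod_type]
    rfl
  have stepA : star (tilde n x) ⬝ᵥ (AI n A).mulVec (tilde n y)
      = ∑ u : Fin n → Fin 2, ∑ s : Fin n → Fin 2, ∑ v : Fin n → Fin 2, ∑ t : Fin n → Fin 2,
          (∏ i, pairState (x i) (u i, s i)) *
            ((A u v * if s = t then (1:ℂ) else 0) * ∏ i, pairState (y i) (v i, t i)) := by
    rw [hstar]
    simp only [dotProduct, mulVec, AI, tilde]
    rw [key]
    refine Finset.sum_congr rfl fun u _ => Finset.sum_congr rfl fun s _ => ?_
    rw [Finset.mul_sum, key (fun g => _)]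
  rw [stepA]
  refine Eq.trans (Finset.sum_congr rfl fun u _ => Finset.sum_comm) ?_
  have stepB : ∀ u v : Fin n → Fin 2,
      (∑ s : Fin n → Fin 2, ∑ t : Fin n → Fin 2,
          (∏ i, pairState (x i) (u i, s i)) *
            ((A u v * if s = t then (1:ℂ) else 0) * ∏ i, pairState (y i) (v i, t i)))
        = A u v * ∏ i, (if okb (x i) (y i) (u i) (v i) then cw (x i) (y i) else 0) := by
    intro u v
    have h1 : ∀ s : Fin n → Fin 2,
        (∑ t : Fin n → Fin 2, (∏ i, pairState (x i) (u i, s i)) *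
            ((A u v * if s = t then (1:ℂ) else 0) * ∏ i, pairState (y i) (v i, t i)))
         = A u v * ∏ i, (pairState (x i) (u i, s i) * pairState (y i) (v i, s i)) := by
      intro s
      simp only [mul_ite, mul_one, mul_zero, ite_mul, zero_mul, Finset.sum_ite_eq,
        Finset.mem_univ, if_true]
      rw [Finset.prod_mul_distrib]
      ring
    rw [Finset.sum_congr rfl fun s _ => h1 s, ← Finset.mul_sum, ← Fintype.prod_sum (fun i a => pairState (x i) (u i, a) * pairState (y i) (v i, a))]
    exact congrArg _ (Finset.prod_congr rfl fun i _ => w_eq _ _ _ _)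
  rw [Finset.sum_congr rfl fun u _ => Finset.sum_congr rfl fun v _ => stepB u v]
  rw [Finset.mul_sum]
  refine Finset.sum_congr rfl fun u _ => ?_
  rw [Finset.mul_sum]
  refine Finset.sum_congr rfl fun v _ => ?_
  rw [prod_ite_cw]
  split_ifs <;> ring

/-- if `⟨x̃|(A⊗I)|ỹ⟩ = 0` for all `x ≠ y`, then `⟨x|A|y⟩ = 0` for all `x ≠ y`. -/
theorem stmt11 (n : ℕ) (A : Matrix (Fin n → Fin 2) (Fin n → Fin 2) ℂ)
    (h : ∀ x y : Fin n → Fin 2, x ≠ y →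
      star (tilde n x) ⬝ᵥ (AI n A).mulVec (tilde n y) = 0) :
    ∀ x y : Fin n → Fin 2, x ≠ y → A x y = 0 := by
  classical
  have okb_self : ∀ a b : Fin 2, okb a b a b := by decide
  have okb_ones : ∀ a b c d : Fin 2, okb a b c d → c = 1 → d = 1 → a = 1 ∧ b = 1 := by decide
  have okb_ne : ∀ a b c d : Fin 2, okb a b c d → ¬(c = a ∧ d = b) →
      a = 1 ∧ b = 1 ∧ c = 0 ∧ d = 0 := by decide
  have okb_diff : ∀ a b c d : Fin 2, okb a b c d → a ≠ b → c = a ∧ d = b := by decide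
  suffices H : ∀ N : ℕ, ∀ x y : Fin n → Fin 2,
      (Finset.univ.filter fun i => x i = 1 ∧ y i = 1).card = N → x ≠ y → A x y = 0 by
    intro x y hxy; exact H _ x y rfl hxy
  intro N
  induction N using Nat.strong_induction_on with
  | _ N ih =>
    intro x y hcard hxy
    have h0 := h x y hxy
    rw [inner_eq] at h0
    have hC : (∏ i, cw (x i) (y i)) ≠ 0 :=
      Finset.prod_ne_zero_iff.mpr fun i _ => cw_ne_zero _ _
    have hsum : (∑ u : Fin n → Fin 2, ∑ v : Fin n → Fin 2,
        if ∀ i, okb (x i) (y i) (u i) (v i) then A u v else 0) = 0 :=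
      (mul_eq_zero.mp h0).resolve_left hC
    -- every term with (u, v) ≠ (x, y) vanishes
    have hterm : ∀ u v : Fin n → Fin 2, ¬(u = x ∧ v = y) →
        (if ∀ i, okb (x i) (y i) (u i) (v i) then A u v else 0) = 0 := by
      intro u v huv
      by_cases hok : ∀ i, okb (x i) (y i) (u i) (v i)
      · rw [if_pos hok]
        -- there is an index where (u,v) differs from (x,y)
        have hex : ∃ i, ¬(u i = x i ∧ v i = y i) := by
          by_contra hc
          push_neg at hc
          exact huv ⟨funext fun i => ((hc i).1 : _), funext fun i => ((hc i).2 : _)⟩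
        obtain ⟨i0, hi0⟩ := hex
        obtain ⟨hx1, hy1, hu0, hv0⟩ := okb_ne _ _ _ _ (hok i0) hi0
        -- u ≠ v
        have huv_ne : u ≠ v := by
          obtain ⟨j, hj⟩ := Function.ne_iff.mp hxy
          obtain ⟨hju, hjv⟩ := okb_diff _ _ _ _ (hok j) hj
          exact Function.ne_iff.mpr ⟨j, by rw [hju, hjv]; exact hj⟩
        -- strict decrease of the measure
        have hss : (Finset.univ.filter fun i => u i = 1 ∧ v i = 1)
            ⊂ (Finset.univ.filter fun i => x i = 1 ∧ y i = 1) := by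
          constructor
          · intro i hi
            rw [Finset.mem_filter] at hi ⊢
            exact ⟨Finset.mem_univ i, okb_ones _ _ _ _ (hok i) hi.2.1 hi.2.2⟩
          · intro hsub
            have hi0mem : i0 ∈ (Finset.univ.filter fun i => x i = 1 ∧ y i = 1) :=
              Finset.mem_filter.mpr ⟨Finset.mem_univ i0, hx1, hy1⟩
            have := Finset.mem_filter.mp (hsub hi0mem)
            rw [hu0] at this
            exact absurd this.2.1 (by decide)
        have hlt : (Finset.univ.filter fun i => u i = 1 ∧ v i = 1).card < N :=
          hcard ▸ Finset.card_lt_card hss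
        exact ih _ hlt u v rfl huv_ne
      · exact if_neg hok
    have : A x y = 0 := by
      have h1 : (∑ u : Fin n → Fin 2, ∑ v : Fin n → Fin 2,
          if ∀ i, okb (x i) (y i) (u i) (v i) then A u v else 0) = A x y := by
        rw [Finset.sum_eq_single x]
        · rw [Finset.sum_eq_single y]
          · exact if_pos fun i => okb_self _ _
          · intro v _ hv; exact hterm x v (fun hp => hv hp.2)
          · intro hx; exact absurd (Finset.mem_univ y) hx
        · intro u _ hu
          exact Finset.sum_eq_zero fun v _ => hterm u v (fun hp => hu hp.1)
        · intro hx; exact absurd (Finset.mem_univ x) hx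
      rw [h1] at hsum; exact hsum
    exact this
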